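/- The number of sequences over {1,-1} of length n whose every prefix sum is nonnegative and which end in a maximal block of exactly k entries -1 (preceded by a 1, for 0 ≤ k ≤ n−2), decomposes the total count a_n of weighted sequences so that a_n = a_{n-1} + Σ_{k=1}^{n-2} 4k · a_{n-1-k} + 4(n-1) + 4n, where weights assign 4h per maximal (-1)-block of length h. -/

import Mathlib

/-- The weight of a ±1 sequence: the product of `4h` over the lengths `h` of the
maximal blocks of `-1`'s (equal to 1 if no `-1` occurs). -/
def gweight (l : List ℤ) : ℕ :=
  ((l.splitOn 1).map (fun b => if b.length = 0 then 1 else 4 * b.length)).prod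

/-- `aseq n` is the sum of the weights `gweight I` over all `I ∈ {1,-1}^n`. -/
def aseq (n : ℕ) : ℕ :=
  ∑ f : Fin n → Bool, gweight (List.ofFn fun i => if f i then (1 : ℤ) else -1)

lemma gw_rep_one (h : ℕ) (l : List ℤ) :
    gweight (List.replicate h (-1) ++ 1 :: l)
      = (if h = 0 then 1 else 4 * h) * gweight l := by
  unfold gweight
  rw [List.splitOn, List.splitOnP_first (xs := List.replicate h (-1)) (p := fun x => x == 1) (by simp) (1 : ℤ) (by simp) l]
  simp [List.splitOn]

lemma gw_rep_nil (h : ℕ) :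
    gweight (List.replicate h (-1)) = if h = 0 then 1 else 4 * h := by
  unfold gweight
  rw [List.splitOn, List.splitOnP_eq_single (xs := List.replicate h (-1)) (p := fun x => x == 1) (by simp)]
  simp

/-- Sum of weights over sequences of length `n` prefixed by `h` copies of `-1`. -/
def bseq (h n : ℕ) : ℕ :=
  ∑ f : Fin n → Bool,
    gweight (List.replicate h (-1) ++ List.ofFn fun i => if f i then (1 : ℤ) else -1)

lemma aseq_eq_bseq (n : ℕ) : aseq n = bseq 0 n := by
  simp [aseq, bseq]

lemma bseq_zero (h : ℕ) : bseq h 0 = if h = 0 then 1 else 4 * h := by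
  simp [bseq, gw_rep_nil]

lemma sum_split (n : ℕ) (F : List ℤ → ℕ) :
    ∑ f : Fin (n+1) → Bool, F (List.ofFn fun i => if f i then (1:ℤ) else -1)
    = (∑ f : Fin n → Bool, F (1 :: List.ofFn fun i => if f i then (1:ℤ) else -1))
    + ∑ f : Fin n → Bool, F (-1 :: List.ofFn fun i => if f i then (1:ℤ) else -1) := by
  rw [← (Fin.consEquiv (fun _ : Fin (n+1) => Bool)).sum_comp
      (fun f => F (List.ofFn fun i => if f i then (1:ℤ) else -1))]
  rw [Fintype.sum_prod_type, Fintype.sum_bool]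
  congr 1 <;> · apply Finset.sum_congr rfl; intro f _
                congr 1
                rw [List.ofFn_succ]
                simp [Fin.consEquiv]

lemma bseq_succ (h n : ℕ) :
    bseq h (n+1) = (if h = 0 then 1 else 4 * h) * aseq n + bseq (h+1) n := by
  unfold bseq
  rw [sum_split n (fun l => gweight (List.replicate h (-1) ++ l))]
  congr 1
  · rw [aseq, Finset.mul_sum]
    apply Finset.sum_congr rfl; intro f _
    exact gw_rep_one h _
  · apply Finset.sum_congr rfl; intro f _
    congr 1
    rw [List.replicate_succ' ]
    simp

lemma aseq_succ (n : ℕ) : aseq (n+1) = aseq n + bseq 1 n := by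
  rw [aseq_eq_bseq, bseq_succ]
  simp [aseq_eq_bseq]

lemma bseq_form : ∀ (n h : ℕ), 1 ≤ h →
    bseq h n = (∑ k ∈ Finset.range n, 4 * (h + k) * aseq (n - 1 - k)) + 4 * (h + n) := by
  intro n
  induction n with
  | zero => intro h hh; rw [bseq_zero, if_neg (by omega)]; simp
  | succ n ih =>
    intro h hh
    rw [bseq_succ, if_neg (by omega), ih (h+1) (by omega)]
    rw [Finset.sum_range_succ']
    have e1 : ∀ k, 4 * (h + 1 + k) * aseq (n - 1 - k) = 4 * (h + (k+1)) * aseq (n + 1 - 1 - (k+1)) := by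
      intro k; congr 2 <;> omega
    simp only [e1]
    have : 4 * (h + 0) * aseq (n + 1 - 1 - 0) = 4 * h * aseq n := by norm_num
    rw [this]
    ring_nf

lemma aseq_zero : aseq 0 = 1 := by
  simp [aseq, gweight]

/-- Classifying sequences by the length of their terminal block of `-1`'s yields
`a_n = a_{n-1} + Σ_{k=1}^{n-2} 4k·a_{n-1-k} + 4(n-1) + 4n`. -/
theorem stmt_18 (n : ℕ) (hn : 2 ≤ n) :
    aseq n = aseq (n - 1) + (∑ k ∈ Finset.Icc 1 (n - 2), 4 * k * aseq (n - 1 - k))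
             + 4 * (n - 1) + 4 * n := by
  obtain ⟨m, rfl⟩ : ∃ m, n = m + 2 := ⟨n - 2, by omega⟩
  have h1 : aseq (m + 2) = aseq (m + 1)
      + ((∑ k ∈ Finset.range (m+1), 4 * (1 + k) * aseq (m + 1 - 1 - k)) + 4 * (1 + (m+1))) := by
    rw [aseq_succ, bseq_form (m+1) 1 le_rfl]
  have h2 : ∑ k ∈ Finset.Icc 1 (m + 1), 4 * k * aseq (m + 1 - k)
      = ∑ k ∈ Finset.range (m+1), 4 * (1 + k) * aseq (m + 1 - 1 - k) := by
    rw [← Finset.Ico_add_one_right_eq_Icc, Finset.sum_Ico_eq_sum_range]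
    apply Finset.sum_congr (by congr 1)
    intro k _; congr 2; omega
  have h3 : ∑ k ∈ Finset.Icc 1 (m + 1), 4 * k * aseq (m + 1 - k)
      = (∑ k ∈ Finset.Icc 1 m, 4 * k * aseq (m + 1 - k)) + 4 * (m+1) * aseq 0 := by
    rw [Finset.sum_Icc_succ_top (by omega), Nat.sub_self]
  have e1 : (m + 2 : ℕ) - 1 = m + 1 := by omega
  have e2 : (m + 2 : ℕ) - 2 = m := by omega
  rw [e1, e2, h1, ← h2, h3, aseq_zero]
  ring
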